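/- Let A_1, B_1 be finite index types with |A_1| = |B_1| = d_1 ≥ 1 and A_2, B_2 be finite index types with |A_2| = |B_2| = d_2 ≥ 1. Let R be a positive semidefinite complex matrix indexed by (A_1 × B_1 × A_2 × B_2) × (A_1 × B_1 × A_2 × B_2). Then Tr[Rᵀ (C_1 ⊗ C_2)] = 1 holds for every pair of bistochastic channel Choi operators C_1 (indexed by A_1 × B_1) and C_2 (indexed by A_2 × B_2) if and only if R = (1/(d_1·d_2))·1 + X, where X is a Hermitian matrix with Tr[X] = 0 satisfying Tr[X·(T_1 ⊗ T_2 ⊗ 1_{A_2 × B_2})] = 0, Tr[X·(1_{A_1 × B_1} ⊗ T_3 ⊗ T_4)] = 0, and Tr[X·(T_1 ⊗ T_2 ⊗ T_3 ⊗ T_4)] = 0 for all traceless Hermitian matrices T_1 (indexed by A_1), T_2 (indexed by B_1), T_3 (indexed by A_2), T_4 (indexed by B_2). -/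

import Mathlib

open Matrix ComplexOrder

/-- The tensor (Kronecker) product of a matrix on `A1 × B1` and a matrix on `A2 × B2`,
indexed by `A1 × B1 × A2 × B2`. -/
noncomputable def kron2 {A1 B1 A2 B2 : Type*}
    (C1 : Matrix (A1 × B1) (A1 × B1) ℂ) (C2 : Matrix (A2 × B2) (A2 × B2) ℂ) :
    Matrix (A1 × B1 × A2 × B2) (A1 × B1 × A2 × B2) ℂ :=
  Matrix.of fun u u' =>
    C1 (u.1, u.2.1) (u'.1, u'.2.1) * C2 (u.2.2.1, u.2.2.2) (u'.2.2.1, u'.2.2.2)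

set_option linter.unusedSectionVars false
set_option maxHeartbeats 1000000



lemma herm_decomp {n : Type*} [Fintype n] (T : Matrix n n ℂ) (hT : T.trace = 0) :
    ∃ H1 H2 : Matrix n n ℂ, H1.IsHermitian ∧ H1.trace = 0 ∧ H2.IsHermitian ∧ H2.trace = 0 ∧
      T = H1 + Complex.I • H2 := by
  refine ⟨((2:ℂ))⁻¹ • (T + Tᴴ), (2 * Complex.I)⁻¹ • (T - Tᴴ), ?_, ?_, ?_, ?_, ?_⟩
  · simp only [Matrix.IsHermitian, conjTranspose_smul, conjTranspose_add,
      conjTranspose_conjTranspose]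
    rw [add_comm Tᴴ T]
    congr 1
    simp [star_inv₀]
  · rw [Matrix.trace_smul, Matrix.trace_add, Matrix.trace_conjTranspose, hT]
    simp
  · simp only [Matrix.IsHermitian, conjTranspose_smul, conjTranspose_sub,
      conjTranspose_conjTranspose]
    rw [show Tᴴ - T = (-1 : ℂ) • (T - Tᴴ) by simp, smul_smul]
    congr 1
    simp only [star_inv₀, star_mul', Complex.star_def, Complex.conj_I, map_ofNat]
    field_simp
  · rw [Matrix.trace_smul, Matrix.trace_sub, Matrix.trace_conjTranspose, hT]
    simp
  · rw [smul_smul, show Complex.I * (2 * Complex.I)⁻¹ = (2:ℂ)⁻¹ by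
      field_simp]
    rw [smul_add, smul_sub]
    module

lemma ext_traceless {n : Type*} [Fintype n] (G : Matrix n n ℂ → ℂ)
    (hsplit : ∀ H1 H2 : Matrix n n ℂ, G (H1 + Complex.I • H2) = G H1 + Complex.I * G H2)
    (h0 : ∀ T, T.IsHermitian → T.trace = 0 → G T = 0) :
    ∀ T : Matrix n n ℂ, T.trace = 0 → G T = 0 := by
  intro T hT
  obtain ⟨H1, H2, hh1, ht1, hh2, ht2, hdec⟩ := herm_decomp T hT
  rw [hdec, hsplit, h0 _ hh1 ht1, h0 _ hh2 ht2]
  ring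

noncomputable def unitE {A : Type*} [DecidableEq A] (d : ℕ) (a a' : A) : Matrix A A ℂ :=
  Matrix.of fun i j => (if i = a then 1 else 0) * (if j = a' then 1 else 0)
    - (if a = a' then ((d:ℂ))⁻¹ else 0) * (if i = j then 1 else 0)

lemma unitE_trace {A : Type*} [Fintype A] [DecidableEq A] (d : ℕ) (hd : 1 ≤ d)
    (hA : Fintype.card A = d) (a a' : A) : (unitE d a a').trace = 0 := by
  simp only [unitE, Matrix.trace, Matrix.diag, Matrix.of_apply, if_pos rfl, mul_one, if_true,
    Finset.sum_sub_distrib, Finset.sum_const, Finset.card_univ, hA, nsmul_eq_mul,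
    ite_mul, one_mul, zero_mul]
  rw [Finset.sum_ite_eq' Finset.univ a (fun i => if i = a' then (1:ℂ) else 0)]
  simp only [Finset.mem_univ, if_true]
  by_cases h : a = a'
  · subst h
    simp only [if_pos rfl]
    have hd0 : (d:ℂ) ≠ 0 := by exact_mod_cast (by omega : d ≠ 0)
    simp [hd0]
  · simp [h, fun (h' : a' = a) => h h'.symm]

lemma delta_decomp {A B : Type*} [Fintype A] [Fintype B] [DecidableEq A] [DecidableEq B]
    (dA dB : ℕ) (Δ : Matrix (A × B) (A × B) ℂ)
    (hrow : ∀ a a', (∑ b : B, Δ (a, b) (a', b)) = 0)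
    (hcol : ∀ b b', (∑ a : A, Δ (a, b) (a, b')) = 0)
    (i i' : A) (j j' : B) :
    Δ (i, j) (i', j') = ∑ k : (A × B) × (A × B),
      Δ k.1 k.2 * (unitE dA k.1.1 k.2.1 i i' * unitE dB k.1.2 k.2.2 j j') := by
  have htr : (∑ k : A × B, Δ k k) = 0 := by
    rw [Fintype.sum_prod_type]
    exact Finset.sum_eq_zero fun a _ => hrow a a
  have h1 : (∑ k : (A × B) × (A × B), Δ k.1 k.2 *
      ((if i = k.1.1 then (1:ℂ) else 0) * (if i' = k.2.1 then 1 else 0)) *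
      ((if j = k.1.2 then (1:ℂ) else 0) * (if j' = k.2.2 then 1 else 0)))
      = Δ (i, j) (i', j') := by
    rw [Fintype.sum_prod_type]
    simp [Fintype.sum_prod_type, mul_ite, ite_mul, mul_zero, zero_mul,
      Finset.sum_ite_eq, Finset.sum_ite_eq']
  have h2 : (∑ k : (A × B) × (A × B), Δ k.1 k.2 *
      ((if i = k.1.1 then (1:ℂ) else 0) * (if i' = k.2.1 then 1 else 0)) *
      ((if k.1.2 = k.2.2 then ((dB:ℂ))⁻¹ else 0) * (if j = j' then 1 else 0)))
      = 0 := by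
    rw [Fintype.sum_prod_type]
    simp only [Fintype.sum_prod_type]
    by_cases hj : j = j'
    · simp only [hj, if_true, mul_ite, ite_mul, mul_zero, zero_mul, mul_one, one_mul,
        Finset.sum_ite_eq, Finset.sum_ite_eq', Finset.mem_univ, if_true]
      have key : ∀ x : A, (∑ x_1 : B, if i = x then Δ (x, x_1) (i', x_1) * (dB:ℂ)⁻¹ else 0)
          = if i = x then (∑ x_1 : B, Δ (x, x_1) (i', x_1)) * (dB:ℂ)⁻¹ else 0 := by
        intro x; split_ifs with h
        · rw [Finset.sum_mul]
        · simp
      rw [Finset.sum_congr rfl fun x _ => key x, Finset.sum_ite_eq]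
      simp only [Finset.mem_univ, if_true]
      rw [hrow, zero_mul]
    · simp [hj]
  have h3 : (∑ k : (A × B) × (A × B), Δ k.1 k.2 *
      ((if k.1.1 = k.2.1 then ((dA:ℂ))⁻¹ else 0) * (if i = i' then 1 else 0)) *
      ((if j = k.1.2 then (1:ℂ) else 0) * (if j' = k.2.2 then 1 else 0)))
      = 0 := by
    rw [Fintype.sum_prod_type]
    simp only [Fintype.sum_prod_type]
    by_cases hi : i = i'
    · simp only [hi, if_true, mul_ite, ite_mul, mul_zero, zero_mul, mul_one, one_mul,
        Finset.sum_ite_eq, Finset.sum_ite_eq', Finset.mem_univ, if_true]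
      have key : ∀ (x : A) (x_1 : B), (∑ x_2 : A,
          if j = x_1 then if x = x_2 then Δ (x, x_1) (x_2, j') * (dA:ℂ)⁻¹ else 0 else 0)
          = if j = x_1 then Δ (x, x_1) (x, j') * (dA:ℂ)⁻¹ else 0 := by
        intro x x_1; split_ifs with h
        · rw [Finset.sum_ite_eq]; simp
        · simp
      rw [Finset.sum_congr rfl fun x _ => Finset.sum_congr rfl fun x_1 _ => key x x_1]
      rw [Finset.sum_congr rfl fun x _ =>
        Finset.sum_ite_eq Finset.univ j (fun x_1 => Δ (x, x_1) (x, j') * (dA:ℂ)⁻¹)]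
      simp only [Finset.mem_univ, if_true]
      rw [← Finset.sum_mul, hcol, zero_mul]
    · simp [hi]
  have h4 : (∑ k : (A × B) × (A × B), Δ k.1 k.2 *
      ((if k.1.1 = k.2.1 then ((dA:ℂ))⁻¹ else 0) * (if i = i' then 1 else 0)) *
      ((if k.1.2 = k.2.2 then ((dB:ℂ))⁻¹ else 0) * (if j = j' then 1 else 0)))
      = 0 := by
    rw [Fintype.sum_prod_type]
    simp only [Fintype.sum_prod_type]
    by_cases hi : i = i' <;> by_cases hj : j = j'
    · simp only [hi, hj, if_true, mul_ite, ite_mul, mul_zero, zero_mul, mul_one, one_mul,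
        Finset.sum_ite_eq, Finset.sum_ite_eq', Finset.mem_univ, if_true]
      apply Finset.sum_eq_zero; intro x _
      rw [← Finset.sum_mul, ← Finset.sum_mul, hrow, zero_mul, zero_mul]
    · simp [hj]
    · simp [hi]
    · simp [hi]
  rw [show (∑ k : (A × B) × (A × B),
      Δ k.1 k.2 * (unitE dA k.1.1 k.2.1 i i' * unitE dB k.1.2 k.2.2 j j'))
      = (∑ k : (A × B) × (A × B), (Δ k.1 k.2 *
        ((if i = k.1.1 then (1:ℂ) else 0) * (if i' = k.2.1 then 1 else 0)) *
        ((if j = k.1.2 then (1:ℂ) else 0) * (if j' = k.2.2 then 1 else 0))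
        - Δ k.1 k.2 *
        ((if i = k.1.1 then (1:ℂ) else 0) * (if i' = k.2.1 then 1 else 0)) *
        ((if k.1.2 = k.2.2 then ((dB:ℂ))⁻¹ else 0) * (if j = j' then 1 else 0))
        - Δ k.1 k.2 *
        ((if k.1.1 = k.2.1 then ((dA:ℂ))⁻¹ else 0) * (if i = i' then 1 else 0)) *
        ((if j = k.1.2 then (1:ℂ) else 0) * (if j' = k.2.2 then 1 else 0))
        + Δ k.1 k.2 *
        ((if k.1.1 = k.2.1 then ((dA:ℂ))⁻¹ else 0) * (if i = i' then 1 else 0)) *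
        ((if k.1.2 = k.2.2 then ((dB:ℂ))⁻¹ else 0) * (if j = j' then 1 else 0))))
      from Finset.sum_congr rfl fun k _ => by
        simp only [unitE, Matrix.of_apply]; ring]
  rw [Finset.sum_add_distrib, Finset.sum_sub_distrib, Finset.sum_sub_distrib,
    h1, h2, h3, h4]
  ring
section aux
variable {A1 B1 A2 B2 : Type*} [Fintype A1] [Fintype B1] [Fintype A2] [Fintype B2]
  [DecidableEq A1] [DecidableEq B1] [DecidableEq A2] [DecidableEq B2]

/-- master 4-slot functional -/
noncomputable def Ffun (X : Matrix (A1 × B1 × A2 × B2) (A1 × B1 × A2 × B2) ℂ)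
    (T1 : Matrix A1 A1 ℂ) (T2 : Matrix B1 B1 ℂ) (T3 : Matrix A2 A2 ℂ)
    (T4 : Matrix B2 B2 ℂ) : ℂ :=
  ∑ u : A1 × B1 × A2 × B2, ∑ u' : A1 × B1 × A2 × B2,
    X u u' * T1 u.1 u'.1 * T2 u.2.1 u'.2.1 * T3 u.2.2.1 u'.2.2.1 * T4 u.2.2.2 u'.2.2.2

lemma delta_prod (p q : Prop) [Decidable p] [Decidable q] :
    (if (p ∧ q) then (1:ℂ) else 0) = (if p then (1:ℂ) else 0) * (if q then 1 else 0) := by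
  split_ifs <;> simp_all

lemma trace_of4 (X : Matrix (A1 × B1 × A2 × B2) (A1 × B1 × A2 × B2) ℂ)
    (T1 : Matrix A1 A1 ℂ) (T2 : Matrix B1 B1 ℂ) (T3 : Matrix A2 A2 ℂ) (T4 : Matrix B2 B2 ℂ) :
    (X * Matrix.of (fun (u u' : A1 × B1 × A2 × B2) =>
      T1 u.1 u'.1 * T2 u.2.1 u'.2.1 * T3 u.2.2.1 u'.2.2.1 * T4 u.2.2.2 u'.2.2.2)).trace
      = Ffun X T1ᵀ T2ᵀ T3ᵀ T4ᵀ := by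
  simp only [Ffun, Matrix.trace, Matrix.diag, Matrix.mul_apply, Matrix.of_apply,
    Matrix.transpose_apply, Finset.sum_congr]
  apply Finset.sum_congr rfl; intro u _
  apply Finset.sum_congr rfl; intro u' _
  ring

lemma trace_of2a (X : Matrix (A1 × B1 × A2 × B2) (A1 × B1 × A2 × B2) ℂ)
    (T1 : Matrix A1 A1 ℂ) (T2 : Matrix B1 B1 ℂ) :
    (X * Matrix.of (fun (u u' : A1 × B1 × A2 × B2) =>
      T1 u.1 u'.1 * T2 u.2.1 u'.2.1 * (if u.2.2 = u'.2.2 then 1 else 0))).trace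
      = Ffun X T1ᵀ T2ᵀ 1 1 := by
  simp only [Ffun, Matrix.trace, Matrix.diag, Matrix.mul_apply, Matrix.of_apply,
    Matrix.transpose_apply, Matrix.one_apply]
  apply Finset.sum_congr rfl; intro u _
  apply Finset.sum_congr rfl; intro u' _
  by_cases h1 : u.2.2.1 = u'.2.2.1 <;> by_cases h2 : u.2.2.2 = u'.2.2.2 <;>
    simp [Prod.ext_iff, h1, h2, eq_comm] <;> ring

lemma trace_of2b (X : Matrix (A1 × B1 × A2 × B2) (A1 × B1 × A2 × B2) ℂ)
    (T3 : Matrix A2 A2 ℂ) (T4 : Matrix B2 B2 ℂ) :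
    (X * Matrix.of (fun (u u' : A1 × B1 × A2 × B2) =>
      (if (u.1, u.2.1) = (u'.1, u'.2.1) then 1 else 0) *
        T3 u.2.2.1 u'.2.2.1 * T4 u.2.2.2 u'.2.2.2)).trace
      = Ffun X 1 1 T3ᵀ T4ᵀ := by
  simp only [Ffun, Matrix.trace, Matrix.diag, Matrix.mul_apply, Matrix.of_apply,
    Matrix.transpose_apply, Matrix.one_apply]
  apply Finset.sum_congr rfl; intro u _
  apply Finset.sum_congr rfl; intro u' _
  by_cases h1 : u.1 = u'.1 <;> by_cases h2 : u.2.1 = u'.2.1 <;>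
    simp [Prod.ext_iff, h1, h2, eq_comm] <;> ring

variable (X : Matrix (A1 × B1 × A2 × B2) (A1 × B1 × A2 × B2) ℂ)

lemma Ffun_split1 (H1 H2 : Matrix A1 A1 ℂ) (T2 : Matrix B1 B1 ℂ) (T3 : Matrix A2 A2 ℂ)
    (T4 : Matrix B2 B2 ℂ) :
    Ffun X (H1 + Complex.I • H2) T2 T3 T4
      = Ffun X H1 T2 T3 T4 + Complex.I * Ffun X H2 T2 T3 T4 := by
  simp only [Ffun]
  rw [Finset.mul_sum, ← Finset.sum_add_distrib]
  refine Finset.sum_congr rfl fun u _ => ?_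
  rw [Finset.mul_sum, ← Finset.sum_add_distrib]
  refine Finset.sum_congr rfl fun u' _ => ?_
  simp only [Matrix.add_apply, Matrix.smul_apply, smul_eq_mul]
  ring

lemma Ffun_split2 (T1 : Matrix A1 A1 ℂ) (H1 H2 : Matrix B1 B1 ℂ) (T3 : Matrix A2 A2 ℂ)
    (T4 : Matrix B2 B2 ℂ) :
    Ffun X T1 (H1 + Complex.I • H2) T3 T4
      = Ffun X T1 H1 T3 T4 + Complex.I * Ffun X T1 H2 T3 T4 := by
  simp only [Ffun]
  rw [Finset.mul_sum, ← Finset.sum_add_distrib]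
  refine Finset.sum_congr rfl fun u _ => ?_
  rw [Finset.mul_sum, ← Finset.sum_add_distrib]
  refine Finset.sum_congr rfl fun u' _ => ?_
  simp only [Matrix.add_apply, Matrix.smul_apply, smul_eq_mul]
  ring

lemma Ffun_split3 (T1 : Matrix A1 A1 ℂ) (T2 : Matrix B1 B1 ℂ) (H1 H2 : Matrix A2 A2 ℂ)
    (T4 : Matrix B2 B2 ℂ) :
    Ffun X T1 T2 (H1 + Complex.I • H2) T4
      = Ffun X T1 T2 H1 T4 + Complex.I * Ffun X T1 T2 H2 T4 := by
  simp only [Ffun]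
  rw [Finset.mul_sum, ← Finset.sum_add_distrib]
  refine Finset.sum_congr rfl fun u _ => ?_
  rw [Finset.mul_sum, ← Finset.sum_add_distrib]
  refine Finset.sum_congr rfl fun u' _ => ?_
  simp only [Matrix.add_apply, Matrix.smul_apply, smul_eq_mul]
  ring

lemma Ffun_split4 (T1 : Matrix A1 A1 ℂ) (T2 : Matrix B1 B1 ℂ) (T3 : Matrix A2 A2 ℂ)
    (H1 H2 : Matrix B2 B2 ℂ) :
    Ffun X T1 T2 T3 (H1 + Complex.I • H2)
      = Ffun X T1 T2 T3 H1 + Complex.I * Ffun X T1 T2 T3 H2 := by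
  simp only [Ffun]
  rw [Finset.mul_sum, ← Finset.sum_add_distrib]
  refine Finset.sum_congr rfl fun u _ => ?_
  rw [Finset.mul_sum, ← Finset.sum_add_distrib]
  refine Finset.sum_congr rfl fun u' _ => ?_
  simp only [Matrix.add_apply, Matrix.smul_apply, smul_eq_mul]
  ring


/-- extension of the 4-fold vanishing hypothesis to all traceless matrices -/
lemma Ffun_ext4
    (h : ∀ (T1 : Matrix A1 A1 ℂ) (T2 : Matrix B1 B1 ℂ) (T3 : Matrix A2 A2 ℂ)
      (T4 : Matrix B2 B2 ℂ), T1.IsHermitian → T1.trace = 0 → T2.IsHermitian → T2.trace = 0 →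
      T3.IsHermitian → T3.trace = 0 → T4.IsHermitian → T4.trace = 0 →
      Ffun X T1 T2 T3 T4 = 0) :
    ∀ (T1 : Matrix A1 A1 ℂ) (T2 : Matrix B1 B1 ℂ) (T3 : Matrix A2 A2 ℂ)
      (T4 : Matrix B2 B2 ℂ), T1.trace = 0 → T2.trace = 0 → T3.trace = 0 → T4.trace = 0 →
      Ffun X T1 T2 T3 T4 = 0 := by
  have e4 : ∀ T1 T2 T3, T1.IsHermitian → T1.trace = 0 → T2.IsHermitian → T2.trace = 0 →
      T3.IsHermitian → T3.trace = 0 → ∀ T4, T4.trace = 0 → Ffun X T1 T2 T3 T4 = 0 := by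
    intro T1 T2 T3 h1 t1 h2 t2 h3 t3
    exact ext_traceless _ (fun H1 H2 => Ffun_split4 X T1 T2 T3 H1 H2)
      (fun T hh ht => h T1 T2 T3 T h1 t1 h2 t2 h3 t3 hh ht)
  have e3 : ∀ T1 T2, T1.IsHermitian → T1.trace = 0 → T2.IsHermitian → T2.trace = 0 →
      ∀ T4, T4.trace = 0 → ∀ T3, T3.trace = 0 → Ffun X T1 T2 T3 T4 = 0 := by
    intro T1 T2 h1 t1 h2 t2 T4 t4
    exact ext_traceless _ (fun H1 H2 => Ffun_split3 X T1 T2 H1 H2 T4)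
      (fun T hh ht => e4 T1 T2 T h1 t1 h2 t2 hh ht T4 t4)
  have e2 : ∀ T1, T1.IsHermitian → T1.trace = 0 →
      ∀ T3, T3.trace = 0 → ∀ T4, T4.trace = 0 → ∀ T2, T2.trace = 0 →
      Ffun X T1 T2 T3 T4 = 0 := by
    intro T1 h1 t1 T3 t3 T4 t4
    exact ext_traceless _ (fun H1 H2 => Ffun_split2 X T1 H1 H2 T3 T4)
      (fun T hh ht => e3 T1 T h1 t1 hh ht T4 t4 T3 t3)
  intro T1 T2 T3 T4 t1 t2 t3 t4
  exact ext_traceless _ (fun H1 H2 => Ffun_split1 X H1 H2 T2 T3 T4)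
    (fun T hh ht => e2 T hh ht T3 t3 T4 t4 T2 t2) T1 t1

/-- extension of the (T1,T2,1,1) vanishing hypothesis -/
lemma Ffun_ext2a
    (h : ∀ (T1 : Matrix A1 A1 ℂ) (T2 : Matrix B1 B1 ℂ),
      T1.IsHermitian → T1.trace = 0 → T2.IsHermitian → T2.trace = 0 →
      Ffun X T1 T2 1 1 = 0) :
    ∀ (T1 : Matrix A1 A1 ℂ) (T2 : Matrix B1 B1 ℂ), T1.trace = 0 → T2.trace = 0 →
      Ffun X T1 T2 1 1 = 0 := by
  have e2 : ∀ T1, T1.IsHermitian → T1.trace = 0 → ∀ T2, T2.trace = 0 →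
      Ffun X T1 T2 1 1 = 0 := by
    intro T1 h1 t1
    exact ext_traceless _ (fun H1 H2 => Ffun_split2 X T1 H1 H2 1 1)
      (fun T hh ht => h T1 T h1 t1 hh ht)
  intro T1 T2 t1 t2
  exact ext_traceless _ (fun H1 H2 => Ffun_split1 X H1 H2 T2 1 1)
    (fun T hh ht => e2 T hh ht T2 t2) T1 t1

lemma Ffun_ext2b
    (h : ∀ (T3 : Matrix A2 A2 ℂ) (T4 : Matrix B2 B2 ℂ),
      T3.IsHermitian → T3.trace = 0 → T4.IsHermitian → T4.trace = 0 →
      Ffun X 1 1 T3 T4 = 0) :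
    ∀ (T3 : Matrix A2 A2 ℂ) (T4 : Matrix B2 B2 ℂ), T3.trace = 0 → T4.trace = 0 →
      Ffun X 1 1 T3 T4 = 0 := by
  have e2 : ∀ T3, T3.IsHermitian → T3.trace = 0 → ∀ T4, T4.trace = 0 →
      Ffun X 1 1 T3 T4 = 0 := by
    intro T3 h3 t3
    exact ext_traceless _ (fun H1 H2 => Ffun_split4 X 1 1 T3 H1 H2)
      (fun T hh ht => h T3 T h3 t3 hh ht)
  intro T3 T4 t3 t4
  exact ext_traceless _ (fun H1 H2 => Ffun_split3 X 1 1 H1 H2 T4)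
    (fun T hh ht => e2 T hh ht T4 t4) T3 t3
end aux

lemma mul_sum2 {ι ι' : Type*} [Fintype ι] [Fintype ι'] (c : ℂ) (t : ι → ι' → ℂ) :
    ∑ i : ι, ∑ j : ι', c * t i j = c * ∑ i : ι, ∑ j : ι', t i j := by
  rw [Finset.mul_sum]
  exact Finset.sum_congr rfl fun i _ => by rw [Finset.mul_sum]

lemma sum_swap1' {ι κ1 κ2 : Type*} [Fintype ι] [Fintype κ1] [Fintype κ2]
    (F : ι → ℂ) (g : κ1 → ι → ℂ) (h : κ2 → ι → ℂ) :
    ∑ j : ι, F j * (∑ k : κ1, g k j) * (∑ l : κ2, h l j)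
      = ∑ k : κ1, ∑ l : κ2, ∑ j : ι, F j * g k j * h l j := by
  have step : ∀ j, F j * (∑ k : κ1, g k j) * (∑ l : κ2, h l j)
      = ∑ k : κ1, ∑ l : κ2, F j * g k j * h l j := by
    intro j
    rw [mul_assoc, Finset.sum_mul_sum, Finset.mul_sum]
    exact Finset.sum_congr rfl fun k _ => by
      rw [Finset.mul_sum]
      exact Finset.sum_congr rfl fun l _ => by ring
  rw [Finset.sum_congr rfl fun j _ => step j, Finset.sum_comm]
  exact Finset.sum_congr rfl fun k _ => Finset.sum_comm

lemma sum_swap2 {ι ι' κ1 κ2 : Type*} [Fintype ι] [Fintype ι'] [Fintype κ1] [Fintype κ2]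
    (F : ι → ι' → ℂ) (g : κ1 → ι → ι' → ℂ) (h : κ2 → ι → ι' → ℂ) :
    ∑ i : ι, ∑ j : ι', F i j * (∑ k : κ1, g k i j) * (∑ l : κ2, h l i j)
      = ∑ k : κ1, ∑ l : κ2, ∑ i : ι, ∑ j : ι', F i j * g k i j * h l i j := by
  rw [Finset.sum_congr rfl fun i _ =>
    sum_swap1' (F i) (fun k j => g k i j) (fun l j => h l i j), Finset.sum_comm]
  exact Finset.sum_congr rfl fun k _ => Finset.sum_comm

lemma sum_swap_left {ι ι' κ : Type*} [Fintype ι] [Fintype ι'] [Fintype κ]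
    (F : ι → ι' → ℂ) (g : κ → ι → ι' → ℂ) (h : ι → ι' → ℂ) :
    ∑ i : ι, ∑ j : ι', F i j * (∑ k : κ, g k i j) * h i j
      = ∑ k : κ, ∑ i : ι, ∑ j : ι', F i j * g k i j * h i j := by
  have step : ∀ i j, F i j * (∑ k : κ, g k i j) * h i j
      = ∑ k : κ, F i j * g k i j * h i j := by
    intro i j
    rw [Finset.mul_sum, Finset.sum_mul]
  rw [Finset.sum_congr rfl fun i _ => Finset.sum_congr rfl fun j _ => step i j,
    Finset.sum_congr rfl fun i _ => Finset.sum_comm, Finset.sum_comm]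

lemma sum_swap_right {ι ι' κ : Type*} [Fintype ι] [Fintype ι'] [Fintype κ]
    (F : ι → ι' → ℂ) (h : ι → ι' → ℂ) (g : κ → ι → ι' → ℂ) :
    ∑ i : ι, ∑ j : ι', F i j * h i j * (∑ k : κ, g k i j)
      = ∑ k : κ, ∑ i : ι, ∑ j : ι', F i j * h i j * g k i j := by
  have step : ∀ i j, F i j * h i j * (∑ k : κ, g k i j)
      = ∑ k : κ, F i j * h i j * g k i j := by
    intro i j
    rw [Finset.mul_sum]
  rw [Finset.sum_congr rfl fun i _ => Finset.sum_congr rfl fun j _ => step i j,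
    Finset.sum_congr rfl fun i _ => Finset.sum_comm, Finset.sum_comm]

lemma one_split {A B : Type*} [DecidableEq A] [DecidableEq B] (p q : A × B) :
    (1 : Matrix (A × B) (A × B) ℂ) p q
      = (1 : Matrix A A ℂ) p.1 q.1 * (1 : Matrix B B ℂ) p.2 q.2 := by
  obtain ⟨a, b⟩ := p; obtain ⟨a', b'⟩ := q
  simp only [Matrix.one_apply, Prod.ext_iff]
  by_cases h1 : a = a' <;> by_cases h2 : b = b' <;> simp [h1, h2]

section gaux
variable {A1 B1 A2 B2 : Type*} [Fintype A1] [Fintype B1] [Fintype A2] [Fintype B2]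
  [DecidableEq A1] [DecidableEq B1] [DecidableEq A2] [DecidableEq B2]

noncomputable def Gfun (X : Matrix (A1 × B1 × A2 × B2) (A1 × B1 × A2 × B2) ℂ)
    (M1 : Matrix (A1 × B1) (A1 × B1) ℂ) (M2 : Matrix (A2 × B2) (A2 × B2) ℂ) : ℂ :=
  ∑ u : A1 × B1 × A2 × B2, ∑ u' : A1 × B1 × A2 × B2,
    X u u' * M1 (u.1, u.2.1) (u'.1, u'.2.1) * M2 (u.2.2.1, u.2.2.2) (u'.2.2.1, u'.2.2.2)

variable (X : Matrix (A1 × B1 × A2 × B2) (A1 × B1 × A2 × B2) ℂ)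

lemma Gfun_add1 (M N : Matrix (A1 × B1) (A1 × B1) ℂ) (M2 : Matrix (A2 × B2) (A2 × B2) ℂ) :
    Gfun X (M + N) M2 = Gfun X M M2 + Gfun X N M2 := by
  simp only [Gfun, Matrix.add_apply]
  rw [← Finset.sum_add_distrib]
  refine Finset.sum_congr rfl fun u _ => ?_
  rw [← Finset.sum_add_distrib]
  exact Finset.sum_congr rfl fun u' _ => by ring

lemma Gfun_add2 (M1 : Matrix (A1 × B1) (A1 × B1) ℂ) (M N : Matrix (A2 × B2) (A2 × B2) ℂ) :
    Gfun X M1 (M + N) = Gfun X M1 M + Gfun X M1 N := by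
  simp only [Gfun, Matrix.add_apply]
  rw [← Finset.sum_add_distrib]
  refine Finset.sum_congr rfl fun u _ => ?_
  rw [← Finset.sum_add_distrib]
  exact Finset.sum_congr rfl fun u' _ => by ring

lemma Gfun_smul1 (c : ℂ) (M : Matrix (A1 × B1) (A1 × B1) ℂ) (M2 : Matrix (A2 × B2) (A2 × B2) ℂ) :
    Gfun X (c • M) M2 = c * Gfun X M M2 := by
  simp only [Gfun, Matrix.smul_apply, smul_eq_mul]
  rw [← mul_sum2]
  exact Finset.sum_congr rfl fun u _ => Finset.sum_congr rfl fun u' _ => by ring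

lemma Gfun_smul2 (c : ℂ) (M1 : Matrix (A1 × B1) (A1 × B1) ℂ) (M : Matrix (A2 × B2) (A2 × B2) ℂ) :
    Gfun X M1 (c • M) = c * Gfun X M1 M := by
  simp only [Gfun, Matrix.smul_apply, smul_eq_mul]
  rw [← mul_sum2]
  exact Finset.sum_congr rfl fun u _ => Finset.sum_congr rfl fun u' _ => by ring

lemma Gfun_one_one : Gfun X 1 1 = X.trace := by
  have key : ∀ u u' : A1 × B1 × A2 × B2,
      (1 : Matrix (A1 × B1) (A1 × B1) ℂ) (u.1, u.2.1) (u'.1, u'.2.1) *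
        (1 : Matrix (A2 × B2) (A2 × B2) ℂ) (u.2.2.1, u.2.2.2) (u'.2.2.1, u'.2.2.2)
      = if u = u' then 1 else 0 := by
    intro u u'
    obtain ⟨a, b, c, e⟩ := u; obtain ⟨a', b', c', e'⟩ := u'
    simp only [Matrix.one_apply, Prod.ext_iff]
    by_cases h1 : a = a' <;> by_cases h2 : b = b' <;> by_cases h3 : c = c' <;>
      by_cases h4 : e = e' <;> simp [h1, h2, h3, h4]
  simp only [Gfun]
  rw [Finset.sum_congr rfl fun u _ => Finset.sum_congr rfl fun u' _ => by
    rw [mul_assoc, key u u']]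
  simp [Matrix.trace, Matrix.diag, mul_ite, mul_one, mul_zero, Finset.sum_ite_eq,
    Finset.sum_ite_eq']

lemma Gfun_eq_trace (R : Matrix (A1 × B1 × A2 × B2) (A1 × B1 × A2 × B2) ℂ)
    (C1 : Matrix (A1 × B1) (A1 × B1) ℂ) (C2 : Matrix (A2 × B2) (A2 × B2) ℂ) :
    (Rᵀ * kron2 C1 C2).trace = Gfun R C1 C2 := by
  simp only [Gfun, Matrix.trace, Matrix.diag, Matrix.mul_apply, Matrix.transpose_apply,
    kron2, Matrix.of_apply]
  rw [Finset.sum_comm]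
  exact Finset.sum_congr rfl fun u _ => Finset.sum_congr rfl fun u' _ => by ring

lemma Gfun_delta_delta (d1 d2 : ℕ)
    (Δ1 : Matrix (A1 × B1) (A1 × B1) ℂ) (Δ2 : Matrix (A2 × B2) (A2 × B2) ℂ)
    (hrow1 : ∀ a a', (∑ b : B1, Δ1 (a, b) (a', b)) = 0)
    (hcol1 : ∀ b b', (∑ a : A1, Δ1 (a, b) (a, b')) = 0)
    (hrow2 : ∀ a a', (∑ b : B2, Δ2 (a, b) (a', b)) = 0)
    (hcol2 : ∀ b b', (∑ a : A2, Δ2 (a, b) (a, b')) = 0)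
    (hd1 : 1 ≤ d1) (hd2 : 1 ≤ d2)
    (hA1 : Fintype.card A1 = d1) (hB1 : Fintype.card B1 = d1)
    (hA2 : Fintype.card A2 = d2) (hB2 : Fintype.card B2 = d2)
    (hvan : ∀ (T1 : Matrix A1 A1 ℂ) (T2 : Matrix B1 B1 ℂ) (T3 : Matrix A2 A2 ℂ)
      (T4 : Matrix B2 B2 ℂ), T1.trace = 0 → T2.trace = 0 → T3.trace = 0 → T4.trace = 0 →
      Ffun X T1 T2 T3 T4 = 0) :
    Gfun X Δ1 Δ2 = 0 := by
  have key : Gfun X Δ1 Δ2 = ∑ k : (A1 × B1) × (A1 × B1), ∑ l : (A2 × B2) × (A2 × B2),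
      ∑ u : A1 × B1 × A2 × B2, ∑ u' : A1 × B1 × A2 × B2,
      X u u' * (Δ1 k.1 k.2 * (unitE d1 k.1.1 k.2.1 u.1 u'.1 *
        unitE d1 k.1.2 k.2.2 u.2.1 u'.2.1)) *
      (Δ2 l.1 l.2 * (unitE d2 l.1.1 l.2.1 u.2.2.1 u'.2.2.1 *
        unitE d2 l.1.2 l.2.2 u.2.2.2 u'.2.2.2)) := by
    rw [show Gfun X Δ1 Δ2 = ∑ u : A1 × B1 × A2 × B2, ∑ u' : A1 × B1 × A2 × B2,
        X u u' * (∑ k : (A1 × B1) × (A1 × B1), Δ1 k.1 k.2 *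
          (unitE d1 k.1.1 k.2.1 u.1 u'.1 * unitE d1 k.1.2 k.2.2 u.2.1 u'.2.1)) *
        (∑ l : (A2 × B2) × (A2 × B2), Δ2 l.1 l.2 *
          (unitE d2 l.1.1 l.2.1 u.2.2.1 u'.2.2.1 * unitE d2 l.1.2 l.2.2 u.2.2.2 u'.2.2.2))
        from Finset.sum_congr rfl fun u _ => Finset.sum_congr rfl fun u' _ => by
          rw [← delta_decomp d1 d1 Δ1 hrow1 hcol1 u.1 u'.1 u.2.1 u'.2.1,
            ← delta_decomp d2 d2 Δ2 hrow2 hcol2 u.2.2.1 u'.2.2.1 u.2.2.2 u'.2.2.2]]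
    exact sum_swap2 _ _ _
  rw [key]
  refine Finset.sum_eq_zero fun k _ => Finset.sum_eq_zero fun l _ => ?_
  have pull : (∑ u : A1 × B1 × A2 × B2, ∑ u' : A1 × B1 × A2 × B2,
      X u u' * (Δ1 k.1 k.2 * (unitE d1 k.1.1 k.2.1 u.1 u'.1 *
        unitE d1 k.1.2 k.2.2 u.2.1 u'.2.1)) *
      (Δ2 l.1 l.2 * (unitE d2 l.1.1 l.2.1 u.2.2.1 u'.2.2.1 *
        unitE d2 l.1.2 l.2.2 u.2.2.2 u'.2.2.2)))
      = (Δ1 k.1 k.2 * Δ2 l.1 l.2) * Ffun X (unitE d1 k.1.1 k.2.1) (unitE d1 k.1.2 k.2.2)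
        (unitE d2 l.1.1 l.2.1) (unitE d2 l.1.2 l.2.2) := by
    rw [Ffun, ← mul_sum2]
    exact Finset.sum_congr rfl fun u _ => Finset.sum_congr rfl fun u' _ => by ring
  rw [pull, hvan _ _ _ _ (unitE_trace d1 hd1 hA1 _ _) (unitE_trace d1 hd1 hB1 _ _)
    (unitE_trace d2 hd2 hA2 _ _) (unitE_trace d2 hd2 hB2 _ _), mul_zero]

lemma Gfun_delta_one (d1 : ℕ)
    (Δ1 : Matrix (A1 × B1) (A1 × B1) ℂ)
    (hrow1 : ∀ a a', (∑ b : B1, Δ1 (a, b) (a', b)) = 0)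
    (hcol1 : ∀ b b', (∑ a : A1, Δ1 (a, b) (a, b')) = 0)
    (hd1 : 1 ≤ d1) (hA1 : Fintype.card A1 = d1) (hB1 : Fintype.card B1 = d1)
    (hvan : ∀ (T1 : Matrix A1 A1 ℂ) (T2 : Matrix B1 B1 ℂ), T1.trace = 0 → T2.trace = 0 →
      Ffun X T1 T2 1 1 = 0) :
    Gfun X Δ1 1 = 0 := by
  have key : Gfun X Δ1 1 = ∑ k : (A1 × B1) × (A1 × B1),
      ∑ u : A1 × B1 × A2 × B2, ∑ u' : A1 × B1 × A2 × B2,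
      X u u' * (Δ1 k.1 k.2 * (unitE d1 k.1.1 k.2.1 u.1 u'.1 *
        unitE d1 k.1.2 k.2.2 u.2.1 u'.2.1)) *
      (1 : Matrix (A2 × B2) (A2 × B2) ℂ) (u.2.2.1, u.2.2.2) (u'.2.2.1, u'.2.2.2) := by
    rw [show Gfun X Δ1 1 = ∑ u : A1 × B1 × A2 × B2, ∑ u' : A1 × B1 × A2 × B2,
        X u u' * (∑ k : (A1 × B1) × (A1 × B1), Δ1 k.1 k.2 *
          (unitE d1 k.1.1 k.2.1 u.1 u'.1 * unitE d1 k.1.2 k.2.2 u.2.1 u'.2.1)) *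
        (1 : Matrix (A2 × B2) (A2 × B2) ℂ) (u.2.2.1, u.2.2.2) (u'.2.2.1, u'.2.2.2)
        from Finset.sum_congr rfl fun u _ => Finset.sum_congr rfl fun u' _ => by
          rw [← delta_decomp d1 d1 Δ1 hrow1 hcol1 u.1 u'.1 u.2.1 u'.2.1]]
    exact sum_swap_left _ _ _
  rw [key]
  refine Finset.sum_eq_zero fun k _ => ?_
  have pull : (∑ u : A1 × B1 × A2 × B2, ∑ u' : A1 × B1 × A2 × B2,
      X u u' * (Δ1 k.1 k.2 * (unitE d1 k.1.1 k.2.1 u.1 u'.1 *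
        unitE d1 k.1.2 k.2.2 u.2.1 u'.2.1)) *
      (1 : Matrix (A2 × B2) (A2 × B2) ℂ) (u.2.2.1, u.2.2.2) (u'.2.2.1, u'.2.2.2))
      = Δ1 k.1 k.2 * Ffun X (unitE d1 k.1.1 k.2.1) (unitE d1 k.1.2 k.2.2) 1 1 := by
    rw [Ffun, ← mul_sum2]
    refine Finset.sum_congr rfl fun u _ => Finset.sum_congr rfl fun u' _ => ?_
    rw [one_split]
    ring
  rw [pull, hvan _ _ (unitE_trace d1 hd1 hA1 _ _) (unitE_trace d1 hd1 hB1 _ _), mul_zero]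

lemma Gfun_one_delta (d2 : ℕ)
    (Δ2 : Matrix (A2 × B2) (A2 × B2) ℂ)
    (hrow2 : ∀ a a', (∑ b : B2, Δ2 (a, b) (a', b)) = 0)
    (hcol2 : ∀ b b', (∑ a : A2, Δ2 (a, b) (a, b')) = 0)
    (hd2 : 1 ≤ d2) (hA2 : Fintype.card A2 = d2) (hB2 : Fintype.card B2 = d2)
    (hvan : ∀ (T3 : Matrix A2 A2 ℂ) (T4 : Matrix B2 B2 ℂ), T3.trace = 0 → T4.trace = 0 →
      Ffun X 1 1 T3 T4 = 0) :
    Gfun X 1 Δ2 = 0 := by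
  have key : Gfun X 1 Δ2 = ∑ l : (A2 × B2) × (A2 × B2),
      ∑ u : A1 × B1 × A2 × B2, ∑ u' : A1 × B1 × A2 × B2,
      X u u' * (1 : Matrix (A1 × B1) (A1 × B1) ℂ) (u.1, u.2.1) (u'.1, u'.2.1) *
      (Δ2 l.1 l.2 * (unitE d2 l.1.1 l.2.1 u.2.2.1 u'.2.2.1 *
        unitE d2 l.1.2 l.2.2 u.2.2.2 u'.2.2.2)) := by
    rw [show Gfun X 1 Δ2 = ∑ u : A1 × B1 × A2 × B2, ∑ u' : A1 × B1 × A2 × B2,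
        X u u' * (1 : Matrix (A1 × B1) (A1 × B1) ℂ) (u.1, u.2.1) (u'.1, u'.2.1) *
        (∑ l : (A2 × B2) × (A2 × B2), Δ2 l.1 l.2 *
          (unitE d2 l.1.1 l.2.1 u.2.2.1 u'.2.2.1 * unitE d2 l.1.2 l.2.2 u.2.2.2 u'.2.2.2))
        from Finset.sum_congr rfl fun u _ => Finset.sum_congr rfl fun u' _ => by
          rw [← delta_decomp d2 d2 Δ2 hrow2 hcol2 u.2.2.1 u'.2.2.1 u.2.2.2 u'.2.2.2]]
    exact sum_swap_right _ _ _
  rw [key]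
  refine Finset.sum_eq_zero fun l _ => ?_
  have pull : (∑ u : A1 × B1 × A2 × B2, ∑ u' : A1 × B1 × A2 × B2,
      X u u' * (1 : Matrix (A1 × B1) (A1 × B1) ℂ) (u.1, u.2.1) (u'.1, u'.2.1) *
      (Δ2 l.1 l.2 * (unitE d2 l.1.1 l.2.1 u.2.2.1 u'.2.2.1 *
        unitE d2 l.1.2 l.2.2 u.2.2.2 u'.2.2.2)))
      = Δ2 l.1 l.2 * Ffun X 1 1 (unitE d2 l.1.1 l.2.1) (unitE d2 l.1.2 l.2.2) := by
    rw [Ffun, ← mul_sum2]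
    refine Finset.sum_congr rfl fun u _ => Finset.sum_congr rfl fun u' _ => ?_
    rw [one_split]
    ring
  rw [pull, hvan _ _ (unitE_trace d2 hd2 hA2 _ _) (unitE_trace d2 hd2 hB2 _ _), mul_zero]

end gaux

lemma isHermitian_real_smul {n : Type*} (r : ℝ) {M : Matrix n n ℂ} (hM : M.IsHermitian) :
    ((r : ℂ) • M).IsHermitian := by
  have : ((r : ℂ) • M)ᴴ = (r : ℂ) • Mᴴ := by
    rw [Matrix.conjTranspose_smul]
    congr 1
    simp [Complex.star_def, Complex.conj_ofReal]
  unfold Matrix.IsHermitian at *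
  rw [this, hM]

lemma psd_perturb {n : Type*} [Fintype n] [DecidableEq n] (d : ℕ) (hd : 1 ≤ d)
    (K : Matrix n n ℂ) (hK : K.IsHermitian) :
    ∃ ε : ℝ, 0 < ε ∧ (((d:ℂ))⁻¹ • (1 : Matrix n n ℂ) + (ε:ℂ) • K).PosSemidef := by
  set c : ℝ := ∑ i : n, ∑ j : n, ‖K i j‖ with hc
  have hc0 : 0 ≤ c :=
    Finset.sum_nonneg fun i _ => Finset.sum_nonneg fun j _ => norm_nonneg _
  have hdR : (0:ℝ) < (d:ℝ) := by exact_mod_cast Nat.pos_of_ne_zero (by omega)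
  set ε : ℝ := (d : ℝ)⁻¹ / (c + 1) with hε
  have hεpos : 0 < ε := div_pos (inv_pos.mpr hdR) (by linarith)
  have hcast : ((d:ℂ))⁻¹ = (((d:ℝ)⁻¹ : ℝ) : ℂ) := by push_cast; ring
  refine ⟨ε, hεpos, Matrix.posSemidef_iff_dotProduct_mulVec.mpr ⟨?_, ?_⟩⟩
  · rw [hcast]
    exact (isHermitian_real_smul _ Matrix.isHermitian_one).add (isHermitian_real_smul _ hK)
  · intro x
    -- quadratic form computation
    have expand : star x ⬝ᵥ ((((d:ℂ))⁻¹ • (1 : Matrix n n ℂ) + (ε:ℂ) • K) *ᵥ x)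
        = ((d:ℂ))⁻¹ * (star x ⬝ᵥ x) + (ε:ℂ) * (star x ⬝ᵥ (K *ᵥ x)) := by
      rw [Matrix.add_mulVec, Matrix.smul_mulVec, Matrix.smul_mulVec,
        Matrix.one_mulVec, dotProduct_add, dotProduct_smul, dotProduct_smul]
      simp [smul_eq_mul]
    set N : ℝ := ∑ i : n, Complex.normSq (x i) with hN
    have hN0 : 0 ≤ N := Finset.sum_nonneg fun i _ => Complex.normSq_nonneg _
    have hxx : star x ⬝ᵥ x = (N : ℂ) := by
      simp only [dotProduct, Pi.star_apply, hN]
      push_cast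
      exact Finset.sum_congr rfl fun i _ => by
        rw [Complex.star_def, ← Complex.normSq_eq_conj_mul_self]
    set w : ℂ := star x ⬝ᵥ (K *ᵥ x) with hw
    have hwexp : w = ∑ i : n, ∑ j : n, (starRingEnd ℂ) (x i) * K i j * x j := by
      simp only [hw, dotProduct, Matrix.mulVec, dotProduct, Pi.star_apply, Finset.mul_sum,
        Complex.star_def]
      exact Finset.sum_congr rfl fun i _ => Finset.sum_congr rfl fun j _ => by ring
    have hwreal : (starRingEnd ℂ) w = w := by
      rw [hwexp, map_sum]
      rw [Finset.sum_comm]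
      refine Finset.sum_congr rfl fun i _ => ?_
      rw [map_sum]
      refine Finset.sum_congr rfl fun j _ => ?_
      simp only [_root_.map_mul, Complex.conj_conj]
      have hk : (starRingEnd ℂ) (K i j) = K j i := by
        have h := congrFun (congrFun hK j) i
        rw [Matrix.conjTranspose_apply, Complex.star_def] at h
        exact h
      rw [hk]
      ring
    have hwre : w = ((w.re : ℝ) : ℂ) := (Complex.conj_eq_iff_re.mp hwreal).symm
    have habs : ‖w‖ ≤ c * N := by
      rw [hwexp]
      calc ‖∑ i : n, ∑ j : n, (starRingEnd ℂ) (x i) * K i j * x j‖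
          ≤ ∑ i : n, ∑ j : n, ‖(starRingEnd ℂ) (x i) * K i j * x j‖ := by
            refine (norm_sum_le _ _).trans ?_
            exact Finset.sum_le_sum fun i _ => norm_sum_le _ _
        _ ≤ ∑ i : n, ∑ j : n, ‖K i j‖ * N := by
            refine Finset.sum_le_sum fun i _ => Finset.sum_le_sum fun j _ => ?_
            rw [norm_mul, norm_mul, Complex.norm_conj]
            have h1 : ‖x i‖ * ‖x j‖ ≤ N := by
              have e1 : (‖x i‖)^2 ≤ N := by
                calc (‖x i‖)^2 = Complex.normSq (x i) := Complex.sq_norm _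
                  _ ≤ N := Finset.single_le_sum (f := fun i => Complex.normSq (x i))
                      (fun i _ => Complex.normSq_nonneg _) (Finset.mem_univ i)
              have e2 : (‖x j‖)^2 ≤ N := by
                calc (‖x j‖)^2 = Complex.normSq (x j) := Complex.sq_norm _
                  _ ≤ N := Finset.single_le_sum (f := fun i => Complex.normSq (x i))
                      (fun i _ => Complex.normSq_nonneg _) (Finset.mem_univ j)
              nlinarith [norm_nonneg (x i), norm_nonneg (x j)]
            calc ‖x i‖ * ‖K i j‖ * ‖x j‖
                = ‖K i j‖ * (‖x i‖ * ‖x j‖) := by ring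
              _ ≤ ‖K i j‖ * N :=
                  mul_le_mul_of_nonneg_left h1 (norm_nonneg _)
        _ = c * N := by
              rw [hc, Finset.sum_mul]
              exact Finset.sum_congr rfl fun i _ => by rw [Finset.sum_mul]
    have key : star x ⬝ᵥ ((((d:ℂ))⁻¹ • (1 : Matrix n n ℂ) + (ε:ℂ) • K) *ᵥ x)
        = ((((d:ℝ))⁻¹ * N + ε * w.re : ℝ) : ℂ) := by
      rw [expand, hxx, hcast, hwre]
      simp only [Complex.ofReal_re]
      push_cast
      ring
    rw [key, Complex.zero_le_real]
    have hre : |w.re| ≤ c * N := le_trans (Complex.abs_re_le_norm w) habs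
    have hεc : ε * (c * N) ≤ (d:ℝ)⁻¹ * N := by
      rw [hε]
      rw [div_mul_eq_mul_div, mul_comm]
      rw [div_le_iff₀ (by linarith)]
      have : c * N * ((d:ℝ)⁻¹) ≤ (c+1) * N * ((d:ℝ)⁻¹) := by
        have : (0:ℝ) ≤ (d:ℝ)⁻¹ := le_of_lt (inv_pos.mpr hdR)
        nlinarith
      calc c * N * (d:ℝ)⁻¹ ≤ (c+1) * N * (d:ℝ)⁻¹ := this
        _ = (d:ℝ)⁻¹ * N * (c+1) := by ring
    have : -(ε * w.re) ≤ ε * (c * N) := by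
      rw [← mul_neg]
      apply mul_le_mul_of_nonneg_left _ (le_of_lt hεpos)
      calc -w.re ≤ |w.re| := neg_le_abs _
        _ ≤ c * N := hre
    linarith


noncomputable def kronAB {A B : Type*} (T1 : Matrix A A ℂ) (T2 : Matrix B B ℂ) :
    Matrix (A × B) (A × B) ℂ :=
  Matrix.of fun p q => T1 p.1 q.1 * T2 p.2 q.2

lemma kronAB_isHermitian {A B : Type*} {T1 : Matrix A A ℂ} {T2 : Matrix B B ℂ}
    (h1 : T1.IsHermitian) (h2 : T2.IsHermitian) : (kronAB T1 T2).IsHermitian := by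
  ext p q
  have e1 : star (T1 q.1 p.1) = T1 p.1 q.1 := by
    have := congrFun (congrFun h1 p.1) q.1
    rwa [Matrix.conjTranspose_apply] at this
  have e2 : star (T2 q.2 p.2) = T2 p.2 q.2 := by
    have := congrFun (congrFun h2 p.2) q.2
    rwa [Matrix.conjTranspose_apply] at this
  simp only [Matrix.conjTranspose_apply, kronAB, Matrix.of_apply, star_mul', e1, e2]

lemma kronAB_trace {A B : Type*} [Fintype A] [Fintype B] (T1 : Matrix A A ℂ)
    (T2 : Matrix B B ℂ) : (kronAB T1 T2).trace = T1.trace * T2.trace := by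
  simp only [Matrix.trace, Matrix.diag, kronAB, Matrix.of_apply, Fintype.sum_prod_type]
  rw [Finset.sum_mul_sum]

-- row/col sums of the perturbed matrix
lemma pert_row {A B : Type*} [Fintype A] [Fintype B] [DecidableEq A] [DecidableEq B]
    (d : ℕ) (hd : 1 ≤ d) (hB : Fintype.card B = d)
    (T1 : Matrix A A ℂ) (T2 : Matrix B B ℂ) (ht2 : T2.trace = 0) (ε : ℝ) :
    ∀ a a', (∑ b : B, (((d:ℂ))⁻¹ • (1 : Matrix (A × B) (A × B) ℂ)
      + (ε:ℂ) • kronAB T1 T2) (a, b) (a', b)) = if a = a' then 1 else 0 := by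
  intro a a'
  have split : ∀ b : B, (((d:ℂ))⁻¹ • (1 : Matrix (A × B) (A × B) ℂ)
      + (ε:ℂ) • kronAB T1 T2) (a, b) (a', b)
      = ((d:ℂ))⁻¹ * (if a = a' then 1 else 0) + (ε:ℂ) * (T1 a a' * T2 b b) := by
    intro b
    simp only [Matrix.add_apply, Matrix.smul_apply, smul_eq_mul, kronAB, Matrix.of_apply,
      Matrix.one_apply, Prod.ext_iff]
    by_cases h : a = a' <;> simp [h]
  rw [Finset.sum_congr rfl fun b _ => split b, Finset.sum_add_distrib]
  rw [Finset.sum_const, ← Finset.mul_sum, ← Finset.mul_sum,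
    show (∑ b : B, T2 b b) = T2.trace from rfl, ht2, mul_zero,
    mul_zero, add_zero, Finset.card_univ, hB, nsmul_eq_mul]
  have hdc : ((d:ℂ)) ≠ 0 := by exact_mod_cast (by omega : d ≠ 0)
  by_cases h : a = a' <;> simp [h] <;> field_simp

lemma pert_col {A B : Type*} [Fintype A] [Fintype B] [DecidableEq A] [DecidableEq B]
    (d : ℕ) (hd : 1 ≤ d) (hA : Fintype.card A = d)
    (T1 : Matrix A A ℂ) (ht1 : T1.trace = 0) (T2 : Matrix B B ℂ) (ε : ℝ) :
    ∀ b b', (∑ a : A, (((d:ℂ))⁻¹ • (1 : Matrix (A × B) (A × B) ℂ)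
      + (ε:ℂ) • kronAB T1 T2) (a, b) (a, b')) = if b = b' then 1 else 0 := by
  intro b b'
  have split : ∀ a : A, (((d:ℂ))⁻¹ • (1 : Matrix (A × B) (A × B) ℂ)
      + (ε:ℂ) • kronAB T1 T2) (a, b) (a, b')
      = ((d:ℂ))⁻¹ * (if b = b' then 1 else 0) + (ε:ℂ) * (T1 a a * T2 b b') := by
    intro a
    simp only [Matrix.add_apply, Matrix.smul_apply, smul_eq_mul, kronAB, Matrix.of_apply,
      Matrix.one_apply, Prod.ext_iff]
    by_cases h : b = b' <;> simp [h]
  rw [Finset.sum_congr rfl fun a _ => split a, Finset.sum_add_distrib]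
  rw [Finset.sum_const, ← Finset.mul_sum]
  rw [show (∑ a : A, T1 a a * T2 b b') = (∑ a : A, T1 a a) * T2 b b' from (Finset.sum_mul _ _ _).symm]
  rw [show (∑ a : A, T1 a a) = T1.trace from rfl, ht1, zero_mul, mul_zero, add_zero,
    Finset.card_univ, hA, nsmul_eq_mul]
  have hdc : ((d:ℂ)) ≠ 0 := by exact_mod_cast (by omega : d ≠ 0)
  by_cases h : b = b' <;> simp [h] <;> field_simp


section main
variable {A1 B1 A2 B2 : Type*} [Fintype A1] [Fintype B1] [Fintype A2] [Fintype B2]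
  [DecidableEq A1] [DecidableEq B1] [DecidableEq A2] [DecidableEq B2]
variable (X : Matrix (A1 × B1 × A2 × B2) (A1 × B1 × A2 × B2) ℂ)

lemma Gfun_bigcomb (c : ℂ) (M1 : Matrix (A1 × B1) (A1 × B1) ℂ)
    (M2 : Matrix (A2 × B2) (A2 × B2) ℂ) :
    Gfun (c • (1 : Matrix (A1 × B1 × A2 × B2) (A1 × B1 × A2 × B2) ℂ) + X) M1 M2
      = c * Gfun 1 M1 M2 + Gfun X M1 M2 := by
  simp only [Gfun, Matrix.add_apply, Matrix.smul_apply, smul_eq_mul]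
  rw [← mul_sum2, ← Finset.sum_add_distrib]
  refine Finset.sum_congr rfl fun u _ => ?_
  rw [← Finset.sum_add_distrib]
  exact Finset.sum_congr rfl fun u' _ => by ring

lemma Gfun_bigsub (Y : Matrix (A1 × B1 × A2 × B2) (A1 × B1 × A2 × B2) ℂ) (c : ℂ)
    (M1 : Matrix (A1 × B1) (A1 × B1) ℂ) (M2 : Matrix (A2 × B2) (A2 × B2) ℂ) :
    Gfun (Y - c • (1 : Matrix (A1 × B1 × A2 × B2) (A1 × B1 × A2 × B2) ℂ)) M1 M2
      = Gfun Y M1 M2 - c * Gfun 1 M1 M2 := by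
  simp only [Gfun, Matrix.sub_apply, Matrix.smul_apply, smul_eq_mul]
  rw [← mul_sum2, ← Finset.sum_sub_distrib]
  refine Finset.sum_congr rfl fun u _ => ?_
  rw [← Finset.sum_sub_distrib]
  exact Finset.sum_congr rfl fun u' _ => by ring

lemma Gfun_bigone (M1 : Matrix (A1 × B1) (A1 × B1) ℂ) (M2 : Matrix (A2 × B2) (A2 × B2) ℂ) :
    Gfun (1 : Matrix (A1 × B1 × A2 × B2) (A1 × B1 × A2 × B2) ℂ) M1 M2
      = M1.trace * M2.trace := by
  simp only [Gfun, Matrix.one_apply, ite_mul, zero_mul, one_mul]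
  rw [Finset.sum_congr rfl fun u (_ : u ∈ Finset.univ) =>
    Finset.sum_ite_eq Finset.univ u (fun u' : A1 × B1 × A2 × B2 =>
      M1 (u.1, u.2.1) (u'.1, u'.2.1) * M2 (u.2.2.1, u.2.2.2) (u'.2.2.1, u'.2.2.2))]
  simp only [Finset.mem_univ, if_true]
  rw [show M1.trace * M2.trace
      = ∑ p : A1 × B1, ∑ q : A2 × B2, M1 p p * M2 q q from by
    rw [Matrix.trace, Matrix.trace, Finset.sum_mul_sum]; rfl]
  simp only [Fintype.sum_prod_type]

lemma Gfun_kron_one (T1 : Matrix A1 A1 ℂ) (T2 : Matrix B1 B1 ℂ) :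
    Gfun X (kronAB T1 T2) 1 = Ffun X T1 T2 1 1 := by
  simp only [Gfun, Ffun, kronAB, Matrix.of_apply]
  refine Finset.sum_congr rfl fun u _ => Finset.sum_congr rfl fun u' _ => ?_
  rw [one_split]
  ring

lemma Gfun_one_kron (T3 : Matrix A2 A2 ℂ) (T4 : Matrix B2 B2 ℂ) :
    Gfun X 1 (kronAB T3 T4) = Ffun X 1 1 T3 T4 := by
  simp only [Gfun, Ffun, kronAB, Matrix.of_apply]
  refine Finset.sum_congr rfl fun u _ => Finset.sum_congr rfl fun u' _ => ?_
  rw [one_split]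
  ring

lemma Gfun_kron_kron (T1 : Matrix A1 A1 ℂ) (T2 : Matrix B1 B1 ℂ)
    (T3 : Matrix A2 A2 ℂ) (T4 : Matrix B2 B2 ℂ) :
    Gfun X (kronAB T1 T2) (kronAB T3 T4) = Ffun X T1 T2 T3 T4 := by
  simp only [Gfun, Ffun, kronAB, Matrix.of_apply]
  exact Finset.sum_congr rfl fun u _ => Finset.sum_congr rfl fun u' _ => by ring

lemma Gfun_expand (Y : Matrix (A1 × B1 × A2 × B2) (A1 × B1 × A2 × B2) ℂ)
    (K1 : Matrix (A1 × B1) (A1 × B1) ℂ) (K2 : Matrix (A2 × B2) (A2 × B2) ℂ)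
    (c1 c2 e1 e2 : ℂ) :
    Gfun Y (c1 • 1 + e1 • K1) (c2 • 1 + e2 • K2)
      = c1 * c2 * Y.trace + c1 * e2 * Gfun Y 1 K2 + e1 * c2 * Gfun Y K1 1
        + e1 * e2 * Gfun Y K1 K2 := by
  simp only [Gfun_add1, Gfun_add2, Gfun_smul1, Gfun_smul2, Gfun_one_one]
  ring

lemma Gfun_kron0_left (M2 : Matrix (A2 × B2) (A2 × B2) ℂ) :
    Gfun X (kronAB (0 : Matrix A1 A1 ℂ) (0 : Matrix B1 B1 ℂ)) M2 = 0 := by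
  simp [Gfun, kronAB]

lemma Gfun_kron0_right (M1 : Matrix (A1 × B1) (A1 × B1) ℂ) :
    Gfun X M1 (kronAB (0 : Matrix A2 A2 ℂ) (0 : Matrix B2 B2 ℂ)) = 0 := by
  simp [Gfun, kronAB]

end main

lemma trace_of_bistoch {A B : Type*} [Fintype A] [Fintype B] [DecidableEq A]
    (d : ℕ) (hA : Fintype.card A = d) (C : Matrix (A × B) (A × B) ℂ)
    (hrow : ∀ a a', (∑ b : B, C (a, b) (a', b)) = if a = a' then 1 else 0) :
    C.trace = (d : ℂ) := by
  rw [Matrix.trace, Fintype.sum_prod_type]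
  simp only [Matrix.diag]
  rw [Finset.sum_congr rfl fun a (_ : a ∈ Finset.univ) => (hrow a a).trans (if_pos rfl)]
  simp [Finset.card_univ, hA]

/-- characterization of deterministic functionals on pairs of bistochastic
channels. A PSD matrix `R` on `A1 × B1 × A2 × B2` satisfies `Tr[Rᵀ (C1 ⊗ C2)] = 1` for
all bistochastic channel Choi operators `C1`, `C2` iff `R = (1/(d1·d2))·1 + X` with `X`
traceless Hermitian orthogonal to `T1⊗T2⊗1`, `1⊗T3⊗T4` and `T1⊗T2⊗T3⊗T4` for all
traceless Hermitian `T1, T2, T3, T4`. -/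
theorem stmt8 {A1 B1 A2 B2 : Type*}
    [Fintype A1] [Fintype B1] [Fintype A2] [Fintype B2]
    [DecidableEq A1] [DecidableEq B1] [DecidableEq A2] [DecidableEq B2]
    (d1 d2 : ℕ) (hd1 : 1 ≤ d1) (hd2 : 1 ≤ d2)
    (hA1 : Fintype.card A1 = d1) (hB1 : Fintype.card B1 = d1)
    (hA2 : Fintype.card A2 = d2) (hB2 : Fintype.card B2 = d2)
    (R : Matrix (A1 × B1 × A2 × B2) (A1 × B1 × A2 × B2) ℂ) (hR : R.PosSemidef) :
    (∀ (C1 : Matrix (A1 × B1) (A1 × B1) ℂ) (C2 : Matrix (A2 × B2) (A2 × B2) ℂ),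
      C1.PosSemidef →
      (∀ a a', (∑ b : B1, C1 (a, b) (a', b)) = if a = a' then 1 else 0) →
      (∀ b b', (∑ a : A1, C1 (a, b) (a, b')) = if b = b' then 1 else 0) →
      C2.PosSemidef →
      (∀ a a', (∑ b : B2, C2 (a, b) (a', b)) = if a = a' then 1 else 0) →
      (∀ b b', (∑ a : A2, C2 (a, b) (a, b')) = if b = b' then 1 else 0) →
      (Rᵀ * kron2 C1 C2).trace = 1) ↔
    ∃ X : Matrix (A1 × B1 × A2 × B2) (A1 × B1 × A2 × B2) ℂ,
      X.IsHermitian ∧ X.trace = 0 ∧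
      (∀ (T1 : Matrix A1 A1 ℂ) (T2 : Matrix B1 B1 ℂ),
        T1.IsHermitian → T1.trace = 0 → T2.IsHermitian → T2.trace = 0 →
        (X * Matrix.of (fun (u u' : A1 × B1 × A2 × B2) =>
          T1 u.1 u'.1 * T2 u.2.1 u'.2.1 *
            (if u.2.2 = u'.2.2 then 1 else 0))).trace = 0) ∧
      (∀ (T3 : Matrix A2 A2 ℂ) (T4 : Matrix B2 B2 ℂ),
        T3.IsHermitian → T3.trace = 0 → T4.IsHermitian → T4.trace = 0 →
        (X * Matrix.of (fun (u u' : A1 × B1 × A2 × B2) =>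
          (if (u.1, u.2.1) = (u'.1, u'.2.1) then 1 else 0) *
            T3 u.2.2.1 u'.2.2.1 * T4 u.2.2.2 u'.2.2.2)).trace = 0) ∧
      (∀ (T1 : Matrix A1 A1 ℂ) (T2 : Matrix B1 B1 ℂ)
         (T3 : Matrix A2 A2 ℂ) (T4 : Matrix B2 B2 ℂ),
        T1.IsHermitian → T1.trace = 0 → T2.IsHermitian → T2.trace = 0 →
        T3.IsHermitian → T3.trace = 0 → T4.IsHermitian → T4.trace = 0 →
        (X * Matrix.of (fun (u u' : A1 × B1 × A2 × B2) =>
          T1 u.1 u'.1 * T2 u.2.1 u'.2.1 *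
            T3 u.2.2.1 u'.2.2.1 * T4 u.2.2.2 u'.2.2.2)).trace = 0) ∧
      R = ((d1 : ℂ) * (d2 : ℂ))⁻¹ • 1 + X := by
  have hd1c : (d1:ℂ) ≠ 0 := by exact_mod_cast (by omega : d1 ≠ 0)
  have hd2c : (d2:ℂ) ≠ 0 := by exact_mod_cast (by omega : d2 ≠ 0)
  constructor
  · intro H
    have H' : ∀ (C1 : Matrix (A1 × B1) (A1 × B1) ℂ) (C2 : Matrix (A2 × B2) (A2 × B2) ℂ),
        C1.PosSemidef →
        (∀ a a', (∑ b : B1, C1 (a, b) (a', b)) = if a = a' then 1 else 0) →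
        (∀ b b', (∑ a : A1, C1 (a, b) (a, b')) = if b = b' then 1 else 0) →
        C2.PosSemidef →
        (∀ a a', (∑ b : B2, C2 (a, b) (a', b)) = if a = a' then 1 else 0) →
        (∀ b b', (∑ a : A2, C2 (a, b) (a, b')) = if b = b' then 1 else 0) →
        Gfun R C1 C2 = 1 := by
      intro C1 C2 h1 h2 h3 h4 h5 h6
      rw [← Gfun_eq_trace]
      exact H C1 C2 h1 h2 h3 h4 h5 h6
    obtain ⟨ε01, hε01, hpsd01⟩ := psd_perturb d1 hd1
      (kronAB (0 : Matrix A1 A1 ℂ) (0 : Matrix B1 B1 ℂ))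
      (kronAB_isHermitian isHermitian_zero isHermitian_zero)
    obtain ⟨ε02, hε02, hpsd02⟩ := psd_perturb d2 hd2
      (kronAB (0 : Matrix A2 A2 ℂ) (0 : Matrix B2 B2 ℂ))
      (kronAB_isHermitian isHermitian_zero isHermitian_zero)
    have row01 := pert_row d1 hd1 hB1 (0 : Matrix A1 A1 ℂ) (0 : Matrix B1 B1 ℂ) (by simp) ε01
    have col01 := pert_col d1 hd1 hA1 (0 : Matrix A1 A1 ℂ) (by simp) (0 : Matrix B1 B1 ℂ) ε01
    have row02 := pert_row d2 hd2 hB2 (0 : Matrix A2 A2 ℂ) (0 : Matrix B2 B2 ℂ) (by simp) ε02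
    have col02 := pert_col d2 hd2 hA2 (0 : Matrix A2 A2 ℂ) (by simp) (0 : Matrix B2 B2 ℂ) ε02
    have key1 : (d1:ℂ)⁻¹ * (d2:ℂ)⁻¹ * ((d1:ℂ) * (d2:ℂ)) = 1 := by field_simp
    have step0 : R.trace = (d1:ℂ) * (d2:ℂ) := by
      have h := H' _ _ hpsd01 row01 col01 hpsd02 row02 col02
      rw [Gfun_expand, Gfun_kron0_left, Gfun_kron0_right, Gfun_kron0_right] at h
      have h0 : (d1:ℂ)⁻¹ * (d2:ℂ)⁻¹ * R.trace = 1 := by linear_combination h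
      field_simp at h0
      linear_combination h0
    have step1 : ∀ (T1 : Matrix A1 A1 ℂ) (T2 : Matrix B1 B1 ℂ),
        T1.IsHermitian → T1.trace = 0 → T2.IsHermitian → T2.trace = 0 →
        Gfun R (kronAB T1 T2) 1 = 0 := by
      intro T1 T2 h1 t1 h2 t2
      obtain ⟨ε, hε, hpsd⟩ := psd_perturb d1 hd1 (kronAB T1 T2) (kronAB_isHermitian h1 h2)
      have h := H' _ _ hpsd (pert_row d1 hd1 hB1 T1 T2 t2 ε)
        (pert_col d1 hd1 hA1 T1 t1 T2 ε) hpsd02 row02 col02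
      rw [Gfun_expand, step0, Gfun_kron0_right, Gfun_kron0_right] at h
      have hεc : ((ε:ℝ):ℂ) ≠ 0 := by exact_mod_cast ne_of_gt hε
      have h0 : ((ε:ℝ):ℂ) * ((d2:ℂ))⁻¹ * Gfun R (kronAB T1 T2) 1 = 0 := by
        linear_combination h - key1
      rcases mul_eq_zero.mp h0 with h' | h'
      · rcases mul_eq_zero.mp h' with h'' | h''
        · exact absurd h'' hεc
        · exact absurd h'' (inv_ne_zero hd2c)
      · exact h'
    have step2 : ∀ (T3 : Matrix A2 A2 ℂ) (T4 : Matrix B2 B2 ℂ),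
        T3.IsHermitian → T3.trace = 0 → T4.IsHermitian → T4.trace = 0 →
        Gfun R 1 (kronAB T3 T4) = 0 := by
      intro T3 T4 h3 t3 h4 t4
      obtain ⟨ε, hε, hpsd⟩ := psd_perturb d2 hd2 (kronAB T3 T4) (kronAB_isHermitian h3 h4)
      have h := H' _ _ hpsd01 row01 col01 hpsd (pert_row d2 hd2 hB2 T3 T4 t4 ε)
        (pert_col d2 hd2 hA2 T3 t3 T4 ε)
      rw [Gfun_expand, step0, Gfun_kron0_left, Gfun_kron0_left] at h
      have hεc : ((ε:ℝ):ℂ) ≠ 0 := by exact_mod_cast ne_of_gt hε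
      have h0 : (d1:ℂ)⁻¹ * ((ε:ℝ):ℂ) * Gfun R 1 (kronAB T3 T4) = 0 := by
        linear_combination h - key1
      rcases mul_eq_zero.mp h0 with h' | h'
      · rcases mul_eq_zero.mp h' with h'' | h''
        · exact absurd h'' (inv_ne_zero hd1c)
        · exact absurd h'' hεc
      · exact h'
    have step3 : ∀ (T1 : Matrix A1 A1 ℂ) (T2 : Matrix B1 B1 ℂ)
        (T3 : Matrix A2 A2 ℂ) (T4 : Matrix B2 B2 ℂ),
        T1.IsHermitian → T1.trace = 0 → T2.IsHermitian → T2.trace = 0 →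
        T3.IsHermitian → T3.trace = 0 → T4.IsHermitian → T4.trace = 0 →
        Gfun R (kronAB T1 T2) (kronAB T3 T4) = 0 := by
      intro T1 T2 T3 T4 h1 t1 h2 t2 h3 t3 h4 t4
      obtain ⟨ε, hε, hpsd⟩ := psd_perturb d1 hd1 (kronAB T1 T2) (kronAB_isHermitian h1 h2)
      obtain ⟨ε', hε', hpsd'⟩ := psd_perturb d2 hd2 (kronAB T3 T4) (kronAB_isHermitian h3 h4)
      have h := H' _ _ hpsd (pert_row d1 hd1 hB1 T1 T2 t2 ε)
        (pert_col d1 hd1 hA1 T1 t1 T2 ε) hpsd' (pert_row d2 hd2 hB2 T3 T4 t4 ε')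
        (pert_col d2 hd2 hA2 T3 t3 T4 ε')
      rw [Gfun_expand, step0, step1 T1 T2 h1 t1 h2 t2, step2 T3 T4 h3 t3 h4 t4] at h
      have hεc : ((ε:ℝ):ℂ) ≠ 0 := by exact_mod_cast ne_of_gt hε
      have hεc' : ((ε':ℝ):ℂ) ≠ 0 := by exact_mod_cast ne_of_gt hε'
      have h0 : ((ε:ℝ):ℂ) * ((ε':ℝ):ℂ) * Gfun R (kronAB T1 T2) (kronAB T3 T4) = 0 := by
        linear_combination h - key1
      rcases mul_eq_zero.mp h0 with h' | h'
      · rcases mul_eq_zero.mp h' with h'' | h''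
        · exact absurd h'' hεc
        · exact absurd h'' hεc'
      · exact h'
    refine ⟨R - ((d1:ℂ) * (d2:ℂ))⁻¹ • 1, ?_, ?_, ?_, ?_, ?_, by module⟩
    · have hcR : ((d1:ℂ) * (d2:ℂ))⁻¹ = ((((d1:ℝ) * (d2:ℝ))⁻¹ : ℝ) : ℂ) := by
        push_cast; ring
      exact hR.1.sub (by rw [hcR]; exact isHermitian_real_smul _ Matrix.isHermitian_one)
    · rw [Matrix.trace_sub, Matrix.trace_smul, Matrix.trace_one, step0]
      have hcard : (Fintype.card (A1 × B1 × A2 × B2) : ℂ) = (d1:ℂ) * (d1:ℂ) * ((d2:ℂ) * (d2:ℂ)) := by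
        simp [Fintype.card_prod, hA1, hB1, hA2, hB2]
        push_cast
        ring
      rw [smul_eq_mul, hcard]
      field_simp
      ring
    · intro T1 T2 h1 t1 h2 t2
      have e1 : Gfun R (kronAB T1ᵀ T2ᵀ) 1 = 0 := step1 T1ᵀ T2ᵀ h1.transpose
        (by rw [Matrix.trace_transpose]; exact t1) h2.transpose
        (by rw [Matrix.trace_transpose]; exact t2)
      rw [trace_of2a, ← Gfun_kron_one, Gfun_bigsub, e1, Gfun_bigone, kronAB_trace,
        Matrix.trace_transpose, t1]
      ring
    · intro T3 T4 h3 t3 h4 t4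
      have e2 : Gfun R 1 (kronAB T3ᵀ T4ᵀ) = 0 := step2 T3ᵀ T4ᵀ h3.transpose
        (by rw [Matrix.trace_transpose]; exact t3) h4.transpose
        (by rw [Matrix.trace_transpose]; exact t4)
      rw [trace_of2b, ← Gfun_one_kron, Gfun_bigsub, e2, Gfun_bigone, kronAB_trace,
        Matrix.trace_transpose, t3]
      ring
    · intro T1 T2 T3 T4 h1 t1 h2 t2 h3 t3 h4 t4
      have e3 : Gfun R (kronAB T1ᵀ T2ᵀ) (kronAB T3ᵀ T4ᵀ) = 0 :=
        step3 T1ᵀ T2ᵀ T3ᵀ T4ᵀ h1.transpose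
          (by rw [Matrix.trace_transpose]; exact t1) h2.transpose
          (by rw [Matrix.trace_transpose]; exact t2) h3.transpose
          (by rw [Matrix.trace_transpose]; exact t3) h4.transpose
          (by rw [Matrix.trace_transpose]; exact t4)
      rw [trace_of4, ← Gfun_kron_kron, Gfun_bigsub, e3, Gfun_bigone, kronAB_trace,
        kronAB_trace, Matrix.trace_transpose, t1]
      ring
  · rintro ⟨X, hXh, hXtr, hc1, hc2, hc3, hReq⟩
    intro C1 C2 hP1 hr1 hcl1 hP2 hr2 hcl2
    have van2a : ∀ (S1 : Matrix A1 A1 ℂ) (S2 : Matrix B1 B1 ℂ), S1.trace = 0 → S2.trace = 0 →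
        Ffun X S1 S2 1 1 = 0 := by
      apply Ffun_ext2a
      intro T1 T2 h1 t1 h2 t2
      have h := hc1 T1ᵀ T2ᵀ h1.transpose (by rw [Matrix.trace_transpose]; exact t1)
        h2.transpose (by rw [Matrix.trace_transpose]; exact t2)
      rw [trace_of2a, Matrix.transpose_transpose, Matrix.transpose_transpose] at h
      exact h
    have van2b : ∀ (S3 : Matrix A2 A2 ℂ) (S4 : Matrix B2 B2 ℂ), S3.trace = 0 → S4.trace = 0 →
        Ffun X 1 1 S3 S4 = 0 := by
      apply Ffun_ext2b
      intro T3 T4 h3 t3 h4 t4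
      have h := hc2 T3ᵀ T4ᵀ h3.transpose (by rw [Matrix.trace_transpose]; exact t3)
        h4.transpose (by rw [Matrix.trace_transpose]; exact t4)
      rw [trace_of2b, Matrix.transpose_transpose, Matrix.transpose_transpose] at h
      exact h
    have van4 : ∀ (S1 : Matrix A1 A1 ℂ) (S2 : Matrix B1 B1 ℂ)
        (S3 : Matrix A2 A2 ℂ) (S4 : Matrix B2 B2 ℂ),
        S1.trace = 0 → S2.trace = 0 → S3.trace = 0 → S4.trace = 0 →
        Ffun X S1 S2 S3 S4 = 0 := by
      apply Ffun_ext4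
      intro T1 T2 T3 T4 h1 t1 h2 t2 h3 t3 h4 t4
      have h := hc3 T1ᵀ T2ᵀ T3ᵀ T4ᵀ h1.transpose
        (by rw [Matrix.trace_transpose]; exact t1) h2.transpose
        (by rw [Matrix.trace_transpose]; exact t2) h3.transpose
        (by rw [Matrix.trace_transpose]; exact t3) h4.transpose
        (by rw [Matrix.trace_transpose]; exact t4)
      rw [trace_of4, Matrix.transpose_transpose, Matrix.transpose_transpose,
        Matrix.transpose_transpose, Matrix.transpose_transpose] at h
      exact h
    set Δ1 := C1 - (d1:ℂ)⁻¹ • 1 with hΔ1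
    set Δ2 := C2 - (d2:ℂ)⁻¹ • 1 with hΔ2
    have base1r := pert_row d1 hd1 hB1 (0 : Matrix A1 A1 ℂ) (0 : Matrix B1 B1 ℂ) (by simp) 0
    have base1c := pert_col d1 hd1 hA1 (0 : Matrix A1 A1 ℂ) (by simp) (0 : Matrix B1 B1 ℂ) 0
    have base2r := pert_row d2 hd2 hB2 (0 : Matrix A2 A2 ℂ) (0 : Matrix B2 B2 ℂ) (by simp) 0
    have base2c := pert_col d2 hd2 hA2 (0 : Matrix A2 A2 ℂ) (by simp) (0 : Matrix B2 B2 ℂ) 0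
    simp only [Complex.ofReal_zero, zero_smul, add_zero] at base1r base1c base2r base2c
    have hrowΔ1 : ∀ a a', (∑ b : B1, Δ1 (a, b) (a', b)) = 0 := by
      intro a a'
      have : (∑ b : B1, Δ1 (a, b) (a', b)) = (∑ b : B1, C1 (a, b) (a', b))
          - (∑ b : B1, ((d1:ℂ)⁻¹ • (1 : Matrix (A1 × B1) (A1 × B1) ℂ)) (a, b) (a', b)) := by
        rw [← Finset.sum_sub_distrib]
        exact Finset.sum_congr rfl fun b _ => by simp [hΔ1, Matrix.sub_apply]
      rw [this, hr1, base1r]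
      ring
    have hcolΔ1 : ∀ b b', (∑ a : A1, Δ1 (a, b) (a, b')) = 0 := by
      intro b b'
      have : (∑ a : A1, Δ1 (a, b) (a, b')) = (∑ a : A1, C1 (a, b) (a, b'))
          - (∑ a : A1, ((d1:ℂ)⁻¹ • (1 : Matrix (A1 × B1) (A1 × B1) ℂ)) (a, b) (a, b')) := by
        rw [← Finset.sum_sub_distrib]
        exact Finset.sum_congr rfl fun a _ => by simp [hΔ1, Matrix.sub_apply]
      rw [this, hcl1, base1c]
      ring
    have hrowΔ2 : ∀ a a', (∑ b : B2, Δ2 (a, b) (a', b)) = 0 := by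
      intro a a'
      have : (∑ b : B2, Δ2 (a, b) (a', b)) = (∑ b : B2, C2 (a, b) (a', b))
          - (∑ b : B2, ((d2:ℂ)⁻¹ • (1 : Matrix (A2 × B2) (A2 × B2) ℂ)) (a, b) (a', b)) := by
        rw [← Finset.sum_sub_distrib]
        exact Finset.sum_congr rfl fun b _ => by simp [hΔ2, Matrix.sub_apply]
      rw [this, hr2, base2r]
      ring
    have hcolΔ2 : ∀ b b', (∑ a : A2, Δ2 (a, b) (a, b')) = 0 := by
      intro b b'
      have : (∑ a : A2, Δ2 (a, b) (a, b')) = (∑ a : A2, C2 (a, b) (a, b'))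
          - (∑ a : A2, ((d2:ℂ)⁻¹ • (1 : Matrix (A2 × B2) (A2 × B2) ℂ)) (a, b) (a, b')) := by
        rw [← Finset.sum_sub_distrib]
        exact Finset.sum_congr rfl fun a _ => by simp [hΔ2, Matrix.sub_apply]
      rw [this, hcl2, base2c]
      ring
    have hTr1 : C1.trace = (d1:ℂ) := trace_of_bistoch d1 hA1 C1 hr1
    have hTr2 : C2.trace = (d2:ℂ) := trace_of_bistoch d2 hA2 C2 hr2
    have hvδδ : Gfun X Δ1 Δ2 = 0 := Gfun_delta_delta X d1 d2 Δ1 Δ2 hrowΔ1 hcolΔ1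
      hrowΔ2 hcolΔ2 hd1 hd2 hA1 hB1 hA2 hB2 van4
    have hvδ1 : Gfun X Δ1 1 = 0 := Gfun_delta_one X d1 Δ1 hrowΔ1 hcolΔ1 hd1 hA1 hB1 van2a
    have hv1δ : Gfun X 1 Δ2 = 0 := Gfun_one_delta X d2 Δ2 hrowΔ2 hcolΔ2 hd2 hA2 hB2 van2b
    have hXv : Gfun X C1 C2 = 0 := by
      have hC1 : C1 = (d1:ℂ)⁻¹ • 1 + (1:ℂ) • Δ1 := by rw [one_smul, hΔ1]; module
      have hC2 : C2 = (d2:ℂ)⁻¹ • 1 + (1:ℂ) • Δ2 := by rw [one_smul, hΔ2]; module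
      rw [hC1, hC2, Gfun_expand, hXtr, hvδδ, hvδ1, hv1δ]
      ring
    rw [Gfun_eq_trace, hReq, Gfun_bigcomb, Gfun_bigone, hTr1, hTr2, hXv]
    field_simp
    ring
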